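/- For every complex z with |z| < 1, Γ(1+z) = exp(-γ z + Σ_{k=2}^∞ (-1)^k ζ(k) z^k / k). -/

import Mathlib

open Complex Filter Topology Finset

private lemma hasSum_sub_log {w : ℂ} (hw : ‖w‖ < 1) :
    HasSum (fun k : ℕ ↦ (-1 : ℂ) ^ (k + 2) * w ^ (k + 2) / ((k : ℂ) + 2))
      (w - Complex.log (1 + w)) := by
  have H := (Complex.hasSum_taylorSeries_log hw).neg
  rw [← hasSum_nat_add_iff' 2] at H
  have hsum : ∑ i ∈ Finset.range 2, -((-1 : ℂ) ^ (i + 1) * w ^ i / (i : ℂ)) = -w := by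
    simp [Finset.sum_range_succ]
  rw [hsum] at H
  have hfun : (fun n : ℕ ↦ -((-1 : ℂ) ^ (n + 2 + 1) * w ^ (n + 2) / ((n + 2 : ℕ) : ℂ)))
      = fun k : ℕ ↦ (-1 : ℂ) ^ (k + 2) * w ^ (k + 2) / ((k : ℂ) + 2) := by
    funext k
    push_cast
    rw [pow_succ]
    ring
  rw [hfun] at H
  convert H using 1
  · rfl
  · ring

private lemma one_add_ne_zero' {w : ℂ} (hw : ‖w‖ < 1) : (1 : ℂ) + w ≠ 0 := by
  intro h
  have h1 : ‖(1 : ℂ)‖ ≤ ‖w‖ := by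
    have : (1 : ℂ) = -w := by linear_combination h
    rw [this, norm_neg]
  rw [norm_one] at h1
  linarith

private lemma norm_z_div_lt {z : ℂ} (hz : ‖z‖ < 1) (j : ℕ) : ‖z / ((j : ℂ) + 1)‖ < 1 := by
  rw [norm_div]
  have h1 : (1 : ℝ) ≤ ‖((j : ℂ) + 1)‖ := by
    have hj : ((j : ℂ) + 1) = ((j + 1 : ℕ) : ℂ) := by push_cast; ring
    rw [hj, Complex.norm_natCast]
    exact_mod_cast Nat.one_le_iff_ne_zero.mpr (Nat.succ_ne_zero j)
  have h2 : ‖z‖ / ‖((j : ℂ) + 1)‖ ≤ ‖z‖ / 1 := by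
    gcongr
  simp only [div_one] at h2
  linarith

private lemma norm_f_eq (z : ℂ) (k j : ℕ) :
    ‖(-1 : ℂ) ^ (k + 2) * (z / ((j : ℂ) + 1)) ^ (k + 2) / ((k : ℂ) + 2)‖
      = ‖z‖ ^ (k + 2) / (((j : ℝ) + 1) ^ (k + 2) * ((k : ℝ) + 2)) := by
  have hj : ((j : ℂ) + 1) = ((j + 1 : ℕ) : ℂ) := by push_cast; ring
  have hk : ((k : ℂ) + 2) = ((k + 2 : ℕ) : ℂ) := by push_cast; ring
  rw [norm_div, norm_mul, norm_pow, norm_pow, norm_neg, norm_one, one_pow, one_mul,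
    norm_div, hj, hk, Complex.norm_natCast, Complex.norm_natCast, div_pow, div_div]
  push_cast
  ring

private lemma summable_f {z : ℂ} (hz : ‖z‖ < 1) :
    Summable (Function.uncurry fun k j : ℕ ↦
      (-1 : ℂ) ^ (k + 2) * (z / ((j : ℂ) + 1)) ^ (k + 2) / ((k : ℂ) + 2)) := by
  apply Summable.of_norm
  have h1 : Summable (fun k : ℕ ↦ ‖z‖ ^ (k + 2)) := by
    apply ((summable_geometric_of_lt_one (norm_nonneg z) hz).mul_left (‖z‖ ^ 2)).congr
    intro k
    rw [← pow_add]
    ring_nf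
  have h2 : Summable (fun j : ℕ ↦ 1 / ((j : ℝ) + 1) ^ 2) := by
    have h3 := Real.summable_one_div_nat_pow.mpr (le_refl 2)
    have := (summable_nat_add_iff 1).mpr h3
    apply this.congr
    intro j
    push_cast
    ring_nf
  apply Summable.of_nonneg_of_le (fun p ↦ norm_nonneg _) ?_ (h1.mul_of_nonneg h2 ?_ ?_)
  · rintro ⟨k, j⟩
    simp only [Function.uncurry_apply_pair]
    rw [norm_f_eq]
    have hj1 : (1 : ℝ) ≤ (j : ℝ) + 1 := by
      have := Nat.cast_nonneg (α := ℝ) j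
      linarith
    calc ‖z‖ ^ (k + 2) / (((j : ℝ) + 1) ^ (k + 2) * ((k : ℝ) + 2))
        ≤ ‖z‖ ^ (k + 2) / (((j : ℝ) + 1) ^ 2 * 1) := by
          gcongr
          · omega
          · have := Nat.cast_nonneg (α := ℝ) k
            linarith
      _ = ‖z‖ ^ (k + 2) * (1 / ((j : ℝ) + 1) ^ 2) := by ring
  · intro k; positivity
  · intro j; positivity

private lemma tsum_swap_eq {z : ℂ} (hz : ‖z‖ < 1) :
    (∑' k : ℕ, (-1 : ℂ) ^ (k + 2) * riemannZeta ((k : ℂ) + 2) * z ^ (k + 2) / ((k : ℂ) + 2))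
      = ∑' j : ℕ, (z / ((j : ℂ) + 1) - Complex.log (1 + z / ((j : ℂ) + 1))) := by
  have hcol : ∀ k : ℕ, (-1 : ℂ) ^ (k + 2) * riemannZeta ((k : ℂ) + 2) * z ^ (k + 2) / ((k : ℂ) + 2)
      = ∑' j : ℕ, (-1 : ℂ) ^ (k + 2) * (z / ((j : ℂ) + 1)) ^ (k + 2) / ((k : ℂ) + 2) := by
    intro k
    have hre : 1 < ((k : ℂ) + 2).re := by
      simp only [Complex.add_re, Complex.natCast_re, Complex.re_ofNat]
      linarith [Nat.cast_nonneg (α := ℝ) k]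
    rw [zeta_eq_tsum_one_div_nat_add_one_cpow hre, ← tsum_mul_left, ← tsum_mul_right,
      ← tsum_div_const]
    congr 1
    funext j
    have hj : ((j : ℂ) + 1) = ((j + 1 : ℕ) : ℂ) := by push_cast; ring
    have hk : ((k : ℂ) + 2) = ((k + 2 : ℕ) : ℂ) := by push_cast; ring
    rw [hk, Complex.cpow_natCast, div_pow]
    have hjne : ((j : ℂ) + 1) ^ (k + 2) ≠ 0 := by
      apply pow_ne_zero
      intro h
      have : ((j : ℝ) + 1) = 0 := by exact_mod_cast congrArg Complex.re h
      have := Nat.cast_nonneg (α := ℝ) j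
      linarith
    field_simp
  calc (∑' k : ℕ, (-1 : ℂ) ^ (k + 2) * riemannZeta ((k : ℂ) + 2) * z ^ (k + 2) / ((k : ℂ) + 2))
      = ∑' (k : ℕ) (j : ℕ), (-1 : ℂ) ^ (k + 2) * (z / ((j : ℂ) + 1)) ^ (k + 2) / ((k : ℂ) + 2) := by
        exact tsum_congr hcol
    _ = ∑' (j : ℕ) (k : ℕ), (-1 : ℂ) ^ (k + 2) * (z / ((j : ℂ) + 1)) ^ (k + 2) / ((k : ℂ) + 2) :=
        (Summable.tsum_comm (summable_f hz)).symm
    _ = ∑' j : ℕ, (z / ((j : ℂ) + 1) - Complex.log (1 + z / ((j : ℂ) + 1))) := by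
        refine tsum_congr fun j ↦ ?_
        exact (hasSum_sub_log (norm_z_div_lt hz j)).tsum_eq

private lemma prod_cast_factorial : ∀ m : ℕ, ∏ j ∈ Finset.range m, ((j : ℂ) + 1)
    = (m.factorial : ℂ)
  | 0 => by simp
  | (m + 1) => by
      rw [Finset.prod_range_succ, prod_cast_factorial m, Nat.factorial_succ]
      push_cast
      ring

private lemma exp_partial {z : ℂ} (hz : ‖z‖ < 1) {n : ℕ} (hn : 1 ≤ n) :
    Complex.exp (-(Real.eulerMascheroniConstant : ℂ) * z +
        ∑ j ∈ Finset.range n, (z / ((j : ℂ) + 1) - Complex.log (1 + z / ((j : ℂ) + 1))))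
      = Complex.GammaSeq (1 + z) n * (((n : ℂ) + 1 + z) / n) *
        Complex.exp ((((harmonic n : ℝ) - Real.log n
          - Real.eulerMascheroniConstant : ℝ) : ℂ) * z) := by
  set γ : ℝ := Real.eulerMascheroniConstant
  set P : ℂ := ∏ j ∈ Finset.range n, (1 + z / ((j : ℂ) + 1)) with hP
  have hfac : ∀ j : ℕ, (1 : ℂ) + z / ((j : ℂ) + 1) ≠ 0 :=
    fun j ↦ one_add_ne_zero' (norm_z_div_lt hz j)
  have hPne : P ≠ 0 := Finset.prod_ne_zero_iff.mpr fun j _ ↦ hfac j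
  have hjne : ∀ j : ℕ, ((j : ℂ) + 1) ≠ 0 := by
    intro j h
    have : ((j : ℝ) + 1) = 0 := by exact_mod_cast congrArg Complex.re h
    linarith [Nat.cast_nonneg (α := ℝ) j]
  have hnne : ((n : ℂ)) ≠ 0 := by
    exact_mod_cast Nat.cast_ne_zero.mpr (by omega)
  -- harmonic cast
  have hH : ((harmonic n : ℝ) : ℂ) = ∑ j ∈ Finset.range n, ((j : ℂ) + 1)⁻¹ := by
    rw [harmonic]
    push_cast
    rfl
  -- exp of the partial sum
  have hexpS : Complex.exp (∑ j ∈ Finset.range n,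
        (z / ((j : ℂ) + 1) - Complex.log (1 + z / ((j : ℂ) + 1))))
      = Complex.exp (((harmonic n : ℝ) : ℂ) * z) / P := by
    rw [Complex.exp_sum]
    have : ∀ j ∈ Finset.range n,
        Complex.exp (z / ((j : ℂ) + 1) - Complex.log (1 + z / ((j : ℂ) + 1)))
          = Complex.exp (z / ((j : ℂ) + 1)) / (1 + z / ((j : ℂ) + 1)) := by
      intro j _
      rw [Complex.exp_sub, Complex.exp_log (hfac j)]
    rw [Finset.prod_congr rfl this, Finset.prod_div_distrib, ← Complex.exp_sum, ← hP]
    congr 2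
    rw [hH, Finset.sum_mul]
    refine Finset.sum_congr rfl fun j _ ↦ ?_
    rw [div_eq_mul_inv, mul_comm]
  -- GammaSeq in product form
  have hGS : Complex.GammaSeq (1 + z) n
      = (n : ℂ) ^ ((1 : ℂ) + z) * (n.factorial : ℂ)
        / (((n + 1).factorial : ℂ) * (P * (1 + z / ((n : ℂ) + 1)))) := by
    show (n : ℂ) ^ ((1:ℂ) + z) * (n.factorial : ℂ) / ∏ j ∈ Finset.range (n + 1), (1 + z + j) = _
    congr 1
    have : ∀ j ∈ Finset.range (n + 1), (1 + z + (j : ℂ))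
        = ((j : ℂ) + 1) * (1 + z / ((j : ℂ) + 1)) := by
      intro j _
      rw [mul_add, mul_one, mul_div_cancel₀ _ (hjne j)]
      ring
    rw [Finset.prod_congr rfl this, Finset.prod_mul_distrib, prod_cast_factorial,
      Finset.prod_range_succ, ← hP]
  -- the power as exponential
  have hcpow : (n : ℂ) ^ ((1 : ℂ) + z) = (n : ℂ) * Complex.exp ((Real.log n : ℂ) * z) := by
    rw [Complex.cpow_def_of_ne_zero hnne, mul_add, Complex.exp_add, mul_one,
      Complex.exp_log hnne, Complex.natCast_log]
  -- final computation
  have hfacne : ((n + 1).factorial : ℂ) ≠ 0 :=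
    Nat.cast_ne_zero.mpr (Nat.factorial_ne_zero _)
  have hfacs : (((n + 1).factorial : ℂ)) = ((n : ℂ) + 1) * (n.factorial : ℂ) := by
    rw [Nat.factorial_succ]
    push_cast
    ring
  have hlast : ((n : ℂ) + 1) * (1 + z / ((n : ℂ) + 1)) = (n : ℂ) + 1 + z := by
    rw [mul_add, mul_one, mul_div_cancel₀ _ (hjne n)]
  rw [Complex.exp_add, hexpS, hGS, hcpow, hfacs]
  have hofReal : ((((harmonic n : ℝ) - Real.log n - γ : ℝ)) : ℂ)
      = ((harmonic n : ℝ) : ℂ) - (Real.log n : ℂ) - (γ : ℂ) := by push_cast; ring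
  rw [hofReal, sub_mul, sub_mul, Complex.exp_sub, Complex.exp_sub]
  have hne1 : (1 : ℂ) + z / ((n : ℂ) + 1) ≠ 0 := hfac n
  have hn1ne : ((n : ℂ) + 1) ≠ 0 := hjne n
  have hexpne : ∀ w : ℂ, Complex.exp w ≠ 0 := Complex.exp_ne_zero
  rw [← hlast, neg_mul, Complex.exp_neg]
  generalize hc : (1 : ℂ) + z / ((n : ℂ) + 1) = c at hne1 ⊢
  generalize hb : ((n : ℂ) + 1) = b at hn1ne ⊢
  have hFne : (n.factorial : ℂ) ≠ 0 := Nat.cast_ne_zero.mpr (Nat.factorial_ne_zero _)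
  rw [inv_mul_eq_div]
  simp only [div_div, div_mul_div_comm]
  rw [div_eq_div_iff]
  · ring
  all_goals
    repeat' apply mul_ne_zero
  all_goals
    first
      | exact hPne
      | exact hnne
      | exact hne1
      | exact hn1ne
      | exact hFne
      | exact Complex.exp_ne_zero _

/-- For |z| < 1, Γ(1+z) = exp(-γ z + Σ_{k=2}^∞ (-1)^k ζ(k) z^k / k). -/
theorem Gamma_one_add_eq_exp (z : ℂ) (hz : ‖z‖ < 1) :
    Complex.Gamma (1 + z) =
      Complex.exp (-(Real.eulerMascheroniConstant : ℂ) * z +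
        ∑' k : ℕ, (-1 : ℂ) ^ (k + 2) * riemannZeta ((k : ℂ) + 2) * z ^ (k + 2) /
          ((k : ℂ) + 2)) := by
  set γ : ℝ := Real.eulerMascheroniConstant with hγdef
  set g : ℕ → ℂ := fun j ↦ z / ((j : ℂ) + 1) - Complex.log (1 + z / ((j : ℂ) + 1)) with hgdef
  rw [tsum_swap_eq hz]
  -- summability of g
  have hgsum : Summable g := by
    have h1 : Summable (fun j : ℕ ↦ ∑' k : ℕ,
        (-1 : ℂ) ^ (k + 2) * (z / ((j : ℂ) + 1)) ^ (k + 2) / ((k : ℂ) + 2)) :=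
      (summable_f hz).prod_symm.prod
    apply h1.congr
    intro j
    exact (hasSum_sub_log (norm_z_div_lt hz j)).tsum_eq
  -- limit of exp of partial sums
  have hS : Filter.Tendsto (fun n : ℕ ↦ ∑ j ∈ Finset.range n, g j) Filter.atTop
      (nhds (∑' j, g j)) := hgsum.hasSum.tendsto_sum_nat
  have hlim1 : Filter.Tendsto
      (fun n : ℕ ↦ Complex.exp (-(γ : ℂ) * z + ∑ j ∈ Finset.range n, g j)) Filter.atTop
      (nhds (Complex.exp (-(γ : ℂ) * z + ∑' j, g j))) :=
    (Complex.continuous_exp.tendsto _).comp (tendsto_const_nhds.add hS)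
  -- limit of the Gamma-sequence expression
  have hratio : Filter.Tendsto (fun n : ℕ ↦ ((n : ℂ) + 1 + z) / n) Filter.atTop (nhds 1) := by
    have hinv : Filter.Tendsto (fun n : ℕ ↦ ((n : ℂ))⁻¹) Filter.atTop (nhds 0) :=
      tendsto_inv_atTop_nhds_zero_nat (𝕜 := ℂ)
    have h2 : Filter.Tendsto (fun n : ℕ ↦ 1 + (1 + z) * ((n : ℂ))⁻¹) Filter.atTop (nhds 1) := by
      have := (hinv.const_mul (1 + z)).const_add 1
      simpa using this
    apply h2.congr'
    filter_upwards [Filter.eventually_ge_atTop 1] with n hn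
    have hnne : ((n : ℂ)) ≠ 0 := Nat.cast_ne_zero.mpr (by omega)
    field_simp
    ring
  have hexp1 : Filter.Tendsto
      (fun n : ℕ ↦ Complex.exp ((((harmonic n : ℝ) - Real.log n - γ : ℝ) : ℂ) * z))
      Filter.atTop (nhds 1) := by
    have h0 : Filter.Tendsto (fun n : ℕ ↦ ((harmonic n : ℝ) - Real.log n - γ)) Filter.atTop
        (nhds 0) := by
      have := Real.tendsto_harmonic_sub_log.sub_const γ
      simpa [hγdef] using this
    have h1 : Filter.Tendsto
        (fun n : ℕ ↦ ((((harmonic n : ℝ) - Real.log n - γ : ℝ)) : ℂ)) Filter.atTop (nhds 0) := by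
      have h := (Complex.continuous_ofReal.tendsto 0).comp h0
      simp only [Complex.ofReal_zero] at h
      exact h
    have h2 : Filter.Tendsto
        (fun n : ℕ ↦ ((((harmonic n : ℝ) - Real.log n - γ : ℝ)) : ℂ) * z) Filter.atTop
        (nhds 0) := by
      have := h1.mul_const z
      simpa using this
    have := (Complex.continuous_exp.tendsto 0).comp h2
    simpa [Function.comp_def] using this
  have hlim2 : Filter.Tendsto
      (fun n : ℕ ↦ Complex.GammaSeq (1 + z) n * (((n : ℂ) + 1 + z) / n) *
        Complex.exp ((((harmonic n : ℝ) - Real.log n - γ : ℝ) : ℂ) * z))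
      Filter.atTop (nhds (Complex.Gamma (1 + z))) := by
    have := ((Complex.GammaSeq_tendsto_Gamma (1 + z)).mul hratio).mul hexp1
    simpa using this
  -- identification
  have heq : Filter.Tendsto
      (fun n : ℕ ↦ Complex.exp (-(γ : ℂ) * z + ∑ j ∈ Finset.range n, g j)) Filter.atTop
      (nhds (Complex.Gamma (1 + z))) := by
    apply hlim2.congr'
    filter_upwards [Filter.eventually_ge_atTop 1] with n hn
    exact (exp_partial hz hn).symm
  exact (tendsto_nhds_unique heq hlim1)
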